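/- Let H be a Hopf algebra over a field k and Λ ∈ H. Then the element η := Σ S(Λ₍₁₎) ⊗ Λ₍₂₎ − S(Λ) ⊗ 1 − 1 ⊗ Λ + ε(Λ) 1 ⊗ 1 lies in ker ε ⊗ ker ε (i.e. (ε ⊗ id)(η) = 0 and (id ⊗ ε)(η) = 0), and η is invariant under the tensor product of the left coactions v ↦ Δv − v ⊗ 1: defining β̂ : H ⊗ H → H ⊗ H ⊗ H on simple tensors by β̂(v ⊗ w) = Σ v₍₁₎ w₍₁₎ ⊗ v₍₂₎ ⊗ w₍₂₎ − Σ v₍₁₎ w ⊗ v₍₂₎ ⊗ 1 − Σ v w₍₁₎ ⊗ 1 ⊗ w₍₂₎ + v w ⊗ 1 ⊗ 1, one has β̂(η) = 1 ⊗ η. -/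

import Mathlib

open TensorProduct

noncomputable section

variable {k H : Type*} [Field k] [Ring H] [HopfAlgebra k H]

/-- The left coaction `β(v) = Δv − v ⊗ 1`. -/
noncomputable def beta : H →ₗ[k] H ⊗[k] H :=
  Coalgebra.comul (R := k) (A := H) - (TensorProduct.mk k H H).flip 1

/-- `β̂(v ⊗ w) = Σ v₍₁₎ w₍₁₎ ⊗ v₍₂₎ ⊗ w₍₂₎ − Σ v₍₁₎ w ⊗ v₍₂₎ ⊗ 1 − Σ v w₍₁₎ ⊗ 1 ⊗ w₍₂₎
  + v w ⊗ 1 ⊗ 1`, the tensor product of the two coactions `β`. -/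
noncomputable def betaHat : H ⊗[k] H →ₗ[k] H ⊗[k] (H ⊗[k] H) :=
  (LinearMap.mul' k H).rTensor (H ⊗[k] H)
    ∘ₗ (TensorProduct.tensorTensorTensorComm k H H H H).toLinearMap
    ∘ₗ TensorProduct.map beta beta

/-- The element `η = Σ S(Λ₍₁₎) ⊗ Λ₍₂₎ − S(Λ) ⊗ 1 − 1 ⊗ Λ + ε(Λ) 1 ⊗ 1`. -/
noncomputable def etaElt (Λ : H) : H ⊗[k] H :=
  (HopfAlgebra.antipode (R := k) (A := H)).rTensor H (Coalgebra.comul Λ)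
    - (HopfAlgebra.antipode (R := k) (A := H) Λ) ⊗ₜ[k] (1 : H)
    - (1 : H) ⊗ₜ[k] Λ
    + (Coalgebra.counit (R := k) Λ) • ((1 : H) ⊗ₜ[k] (1 : H))

namespace Statement8Aux

open Coalgebra HopfAlgebra LinearMap

variable (k H) in
/-- Abbreviation for the antipode. -/
noncomputable abbrev SL : H →ₗ[k] H := HopfAlgebra.antipode (R := k) (A := H)

lemma SL_def : SL k H = HopfAlgebra.antipode (R := k) (A := H) := rfl

lemma sum_counit_smul {x : H} (r : Coalgebra.Repr k x (H × H)) :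
    ∑ i ∈ r.index, Coalgebra.counit (R := k) (r.left i) • r.right i = x := by
  have h := congrArg (TensorProduct.lid k H) (Coalgebra.sum_counit_tmul_eq r)
  rw [map_sum] at h
  simp only [TensorProduct.lid_tmul, one_smul] at h
  exact h

lemma sum_smul_counit {x : H} (r : Coalgebra.Repr k x (H × H)) :
    ∑ i ∈ r.index, Coalgebra.counit (R := k) (r.right i) • r.left i = x := by
  have h := congrArg (TensorProduct.rid k H) (Coalgebra.sum_tmul_counit_eq r)
  rw [map_sum] at h
  simp only [TensorProduct.rid_tmul, one_smul] at h
  exact h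

lemma counit_antipode (x : H) :
    Coalgebra.counit (R := k) (SL k H x) = Coalgebra.counit (R := k) x := by
  set r := Coalgebra.Repr.arbitrary k x with hr
  have h1 := HopfAlgebra.sum_antipode_mul_eq_algebraMap_counit (R := k) r
  have h2 := congrArg (Coalgebra.counit (R := k) (A := H)) h1
  simp only [map_sum, Bialgebra.counit_mul, Bialgebra.counit_algebraMap] at h2
  calc Coalgebra.counit (R := k) (SL k H x)
      = Coalgebra.counit (R := k) (SL k H
          (∑ i ∈ r.index, Coalgebra.counit (R := k) (r.right i) • r.left i)) := by
        rw [sum_smul_counit r]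
    _ = ∑ i ∈ r.index, Coalgebra.counit (R := k)
          (HopfAlgebra.antipode (R := k) (r.left i)) * Coalgebra.counit (R := k) (r.right i) := by
        simp [map_sum, map_smul, smul_eq_mul, mul_comm, SL]
    _ = Coalgebra.counit (R := k) x := h2

lemma counit_comp_antipode :
    (Coalgebra.counit (R := k) (A := H)) ∘ₗ SL k H = Coalgebra.counit (R := k) (A := H) :=
  LinearMap.ext counit_antipode

section Conv

variable {B C : Type*} [Ring B] [Algebra k B] [Ring C] [Algebra k C]

/-- Convolution product on `Hom(H, B)`. -/
noncomputable def conv (f g : H →ₗ[k] B) : H →ₗ[k] B :=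
  LinearMap.mul' k B ∘ₗ TensorProduct.map f g ∘ₗ Coalgebra.comul

variable (k H B) in
/-- The convolution unit. -/
noncomputable def convOne : H →ₗ[k] B :=
  Algebra.linearMap k B ∘ₗ Coalgebra.counit

lemma conv_apply (f g : H →ₗ[k] B) {x : H} (r : Coalgebra.Repr k x (H × H)) :
    conv f g x = ∑ i ∈ r.index, f (r.left i) * g (r.right i) := by
  simp only [conv, LinearMap.comp_apply, ← r.eq, map_sum, TensorProduct.map_tmul,
    LinearMap.mul'_apply]

lemma convOne_apply (x : H) :
    convOne k H B x = algebraMap k B (Coalgebra.counit (R := k) x) := rfl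

lemma one_conv (f : H →ₗ[k] B) : conv (convOne k H B) f = f := by
  ext x
  set r := Coalgebra.Repr.arbitrary k x
  rw [conv_apply _ _ r]
  calc ∑ i ∈ r.index, convOne k H B (r.left i) * f (r.right i)
      = ∑ i ∈ r.index, f (Coalgebra.counit (R := k) (r.left i) • r.right i) := by
        refine Finset.sum_congr rfl fun i _ => ?_
        rw [convOne_apply, ← Algebra.smul_def, ← map_smul]
    _ = f x := by rw [← map_sum, sum_counit_smul r]

lemma conv_one (f : H →ₗ[k] B) : conv f (convOne k H B) = f := by
  ext x
  set r := Coalgebra.Repr.arbitrary k x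
  rw [conv_apply _ _ r]
  calc ∑ i ∈ r.index, f (r.left i) * convOne k H B (r.right i)
      = ∑ i ∈ r.index, f (Coalgebra.counit (R := k) (r.right i) • r.left i) := by
        refine Finset.sum_congr rfl fun i _ => ?_
        rw [convOne_apply, ← Algebra.commutes, ← Algebra.smul_def, map_smul]
    _ = f x := by rw [← map_sum, sum_smul_counit r]

lemma conv_assoc (f g h : H →ₗ[k] B) : conv (conv f g) h = conv f (conv g h) := by
  ext x
  set r := Coalgebra.Repr.arbitrary k x with hr
  set rl : (i : H × H) → Coalgebra.Repr k (r.left i) (H × H) :=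
    fun i => Coalgebra.Repr.arbitrary k (r.left i) with hrl
  set rr : (i : H × H) → Coalgebra.Repr k (r.right i) (H × H) :=
    fun i => Coalgebra.Repr.arbitrary k (r.right i) with hrr
  have key := Coalgebra.sum_map_tmul_tmul_eq (f := f) (g := g) (h := h) x
    (repr := r) (a₁ := rl) (a₂ := rr)
  apply_fun (LinearMap.mul' k B ∘ₗ (LinearMap.mul' k B).lTensor B) at key
  simp only [map_sum, LinearMap.comp_apply, LinearMap.lTensor_tmul, LinearMap.mul'_apply] at key
  calc conv (conv f g) h x
      = ∑ i ∈ r.index, (∑ j ∈ (rl i).index,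
          f ((rl i).left j) * g ((rl i).right j)) * h (r.right i) := by
        rw [conv_apply _ _ r]
        exact Finset.sum_congr rfl fun i _ => by rw [conv_apply _ _ (rl i)]
    _ = ∑ i ∈ r.index, ∑ j ∈ (rl i).index,
          f ((rl i).left j) * (g ((rl i).right j) * h (r.right i)) := by
        simp [Finset.sum_mul, mul_assoc]
    _ = ∑ i ∈ r.index, ∑ j ∈ (rr i).index,
          f (r.left i) * (g ((rr i).left j) * h ((rr i).right j)) := key.symm
    _ = conv f (conv g h) x := by
        rw [conv_apply _ _ r]
        refine Finset.sum_congr rfl fun i _ => ?_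
        rw [conv_apply _ _ (rr i), Finset.mul_sum]

lemma algHom_conv (φ : B →ₐ[k] C) (f g : H →ₗ[k] B) :
    conv (φ.toLinearMap ∘ₗ f) (φ.toLinearMap ∘ₗ g) = φ.toLinearMap ∘ₗ conv f g := by
  ext x
  set r := Coalgebra.Repr.arbitrary k x
  rw [LinearMap.comp_apply, conv_apply _ _ r, conv_apply _ _ r]
  simp [map_sum]

lemma algHom_convOne (φ : B →ₐ[k] C) :
    φ.toLinearMap ∘ₗ convOne k H B = convOne k H C := by
  ext x
  simp [convOne_apply, AlgHom.commutes]

lemma conv_sub_left (f f' g : H →ₗ[k] B) :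
    conv (f - f') g = conv f g - conv f' g := by
  ext x
  set r := Coalgebra.Repr.arbitrary k x
  simp [conv_apply _ _ r, sub_mul, Finset.sum_sub_distrib]

lemma conv_sub_right (f g g' : H →ₗ[k] B) :
    conv f (g - g') = conv f g - conv f g' := by
  ext x
  set r := Coalgebra.Repr.arbitrary k x
  simp [conv_apply _ _ r, mul_sub, Finset.sum_sub_distrib]

end Conv

/-- `g' : x ↦ x ⊗ 1`. -/
noncomputable def gR : H →ₗ[k] H ⊗[k] H := (TensorProduct.mk k H H).flip 1

/-- `mk1 : x ↦ 1 ⊗ x`. -/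
noncomputable def mkL : H →ₗ[k] H ⊗[k] H := TensorProduct.mk k H H 1

/-- `h : x ↦ 1 ⊗ S x`. -/
noncomputable def hM : H →ₗ[k] H ⊗[k] H := mkL ∘ₗ SL k H

/-- `q : x ↦ Σ S x₁ ⊗ x₂`. -/
noncomputable def qM : H →ₗ[k] H ⊗[k] H := (SL k H).rTensor H ∘ₗ Coalgebra.comul

/-- `ΔS : x ↦ Δ (S x)`. -/
noncomputable def dS : H →ₗ[k] H ⊗[k] H := Coalgebra.comul ∘ₗ SL k H

@[simp] lemma gR_apply (x : H) : (gR : H →ₗ[k] H ⊗[k] H) x = x ⊗ₜ[k] 1 := rfl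
@[simp] lemma mkL_apply (x : H) : (mkL : H →ₗ[k] H ⊗[k] H) x = 1 ⊗ₜ[k] x := rfl
@[simp] lemma hM_apply (x : H) : (hM : H →ₗ[k] H ⊗[k] H) x = 1 ⊗ₜ[k] SL k H x := rfl
@[simp] lemma dS_apply (x : H) :
    (dS : H →ₗ[k] H ⊗[k] H) x = Coalgebra.comul (R := k) (SL k H x) := rfl

lemma qM_apply {x : H} (r : Coalgebra.Repr k x (H × H)) :
    (qM : H →ₗ[k] H ⊗[k] H) x = ∑ i ∈ r.index, SL k H (r.left i) ⊗ₜ[k] r.right i := by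
  simp only [qM, LinearMap.comp_apply, ← r.eq, map_sum, LinearMap.rTensor_tmul]

/-- L1 : `ΔS * Δ = 1` in the convolution algebra. -/
lemma L1 : conv (dS : H →ₗ[k] H ⊗[k] H) Coalgebra.comul = convOne k H (H ⊗[k] H) := by
  ext x
  set r := Coalgebra.Repr.arbitrary k x
  rw [conv_apply _ _ r, convOne_apply]
  calc ∑ i ∈ r.index, dS (r.left i) * Coalgebra.comul (r.right i)
      = ∑ i ∈ r.index, Coalgebra.comul (R := k) (SL k H (r.left i) * r.right i) := by
        simp [dS, Bialgebra.comul_mul]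
    _ = Coalgebra.comul (R := k)
          (∑ i ∈ r.index, HopfAlgebra.antipode (R := k) (r.left i) * r.right i) := by
        rw [map_sum]
    _ = algebraMap k (H ⊗[k] H) (Coalgebra.counit (R := k) x) := by
        rw [HopfAlgebra.sum_antipode_mul_eq_algebraMap_counit r, Bialgebra.comul_algebraMap]

/-- L2 : `Δ * h = g'` in the convolution algebra. -/
lemma L2 : conv (Coalgebra.comul : H →ₗ[k] H ⊗[k] H) hM = gR := by
  ext x
  set r := Coalgebra.Repr.arbitrary k x
  set rl : (i : H × H) → Coalgebra.Repr k (r.left i) (H × H) :=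
    fun i => Coalgebra.Repr.arbitrary k (r.left i)
  set rr : (i : H × H) → Coalgebra.Repr k (r.right i) (H × H) :=
    fun i => Coalgebra.Repr.arbitrary k (r.right i)
  have key := Coalgebra.sum_tmul_tmul_eq r rl rr
  apply_fun LinearMap.lTensor H (LinearMap.mul' k H ∘ₗ (SL k H).lTensor H) at key
  simp only [map_sum, LinearMap.lTensor_tmul, LinearMap.comp_apply,
    LinearMap.mul'_apply] at key
  calc conv (Coalgebra.comul : H →ₗ[k] H ⊗[k] H) hM x
      = ∑ i ∈ r.index, Coalgebra.comul (r.left i) * ((1 : H) ⊗ₜ[k] SL k H (r.right i)) := by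
        rw [conv_apply _ _ r]; simp
    _ = ∑ i ∈ r.index, ∑ j ∈ (rl i).index,
          (rl i).left j ⊗ₜ[k] ((rl i).right j * SL k H (r.right i)) := by
        refine Finset.sum_congr rfl fun i _ => ?_
        rw [← (rl i).eq, Finset.sum_mul]
        simp [Algebra.TensorProduct.tmul_mul_tmul]
    _ = ∑ i ∈ r.index, ∑ j ∈ (rr i).index,
          r.left i ⊗ₜ[k] ((rr i).left j * SL k H ((rr i).right j)) := key
    _ = ∑ i ∈ r.index, Coalgebra.counit (R := k) (r.right i) • (r.left i ⊗ₜ[k] (1 : H)) := by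
        refine Finset.sum_congr rfl fun i _ => ?_
        rw [← TensorProduct.tmul_sum]
        rw [show ∑ j ∈ (rr i).index, (rr i).left j * SL k H ((rr i).right j)
              = algebraMap k H (Coalgebra.counit (R := k) (r.right i)) from
            HopfAlgebra.sum_mul_antipode_eq_algebraMap_counit (rr i)]
        rw [Algebra.algebraMap_eq_smul_one, TensorProduct.tmul_smul]
    _ = gR x := by
        rw [gR_apply]
        simp only [TensorProduct.smul_tmul']
        rw [← TensorProduct.sum_tmul, sum_smul_counit r]

/-- L2' : `(g' ∘ S) * Δ = mk1` in the convolution algebra. -/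
lemma L2' : conv ((gR : H →ₗ[k] H ⊗[k] H) ∘ₗ SL k H) Coalgebra.comul = mkL := by
  ext x
  set r := Coalgebra.Repr.arbitrary k x
  set rl : (i : H × H) → Coalgebra.Repr k (r.left i) (H × H) :=
    fun i => Coalgebra.Repr.arbitrary k (r.left i)
  set rr : (i : H × H) → Coalgebra.Repr k (r.right i) (H × H) :=
    fun i => Coalgebra.Repr.arbitrary k (r.right i)
  have key := Coalgebra.sum_tmul_tmul_eq r rl rr
  apply_fun ((LinearMap.mul' k H).rTensor H ∘ₗ
    (TensorProduct.assoc k H H H).symm.toLinearMap ∘ₗ (SL k H).rTensor (H ⊗[k] H)) at key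
  simp only [map_sum, LinearMap.comp_apply, LinearMap.rTensor_tmul,
    LinearEquiv.coe_coe, TensorProduct.assoc_symm_tmul, LinearMap.mul'_apply] at key
  calc conv ((gR : H →ₗ[k] H ⊗[k] H) ∘ₗ SL k H) Coalgebra.comul x
      = ∑ i ∈ r.index, (SL k H (r.left i) ⊗ₜ[k] (1 : H)) * Coalgebra.comul (r.right i) := by
        rw [conv_apply _ _ r]; simp
    _ = ∑ i ∈ r.index, ∑ j ∈ (rr i).index,
          (SL k H (r.left i) * (rr i).left j) ⊗ₜ[k] (rr i).right j := by
        refine Finset.sum_congr rfl fun i _ => ?_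
        rw [← (rr i).eq, Finset.mul_sum]
        simp [Algebra.TensorProduct.tmul_mul_tmul]
    _ = ∑ i ∈ r.index, ∑ j ∈ (rl i).index,
          (SL k H ((rl i).left j) * (rl i).right j) ⊗ₜ[k] r.right i := key.symm
    _ = ∑ i ∈ r.index, algebraMap k H (Coalgebra.counit (R := k) (r.left i)) ⊗ₜ[k] r.right i := by
        refine Finset.sum_congr rfl fun i _ => ?_
        rw [← TensorProduct.sum_tmul, HopfAlgebra.sum_antipode_mul_eq_algebraMap_counit (rl i)]
    _ = mkL x := by
        have h := congrArg ((Algebra.linearMap k H).rTensor H) (Coalgebra.sum_counit_tmul_eq r)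
        rw [map_sum] at h
        simp only [LinearMap.rTensor_tmul, Algebra.linearMap_apply, map_one] at h
        rw [mkL_apply]
        exact h

/-- L3 : `ΔS * g' = h`. -/
lemma L3 : conv (dS : H →ₗ[k] H ⊗[k] H) gR = hM := by
  calc conv (dS : H →ₗ[k] H ⊗[k] H) gR
      = conv dS (conv Coalgebra.comul hM) := by rw [L2]
    _ = conv (conv dS Coalgebra.comul) hM := (conv_assoc _ _ _).symm
    _ = conv (convOne k H (H ⊗[k] H)) hM := by rw [L1]
    _ = hM := one_conv _

variable (k H) in
/-- `j₁ : a ⊗ b ↦ a ⊗ (b ⊗ 1)`. -/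
noncomputable def j1 : H ⊗[k] H →ₐ[k] H ⊗[k] (H ⊗[k] H) :=
  Algebra.TensorProduct.map (AlgHom.id k H) Algebra.TensorProduct.includeLeft

variable (k H) in
/-- `j₂ : a ⊗ b ↦ a ⊗ (1 ⊗ b)`. -/
noncomputable def j2 : H ⊗[k] H →ₐ[k] H ⊗[k] (H ⊗[k] H) :=
  Algebra.TensorProduct.map (AlgHom.id k H) Algebra.TensorProduct.includeRight

@[simp] lemma j1_tmul (a b : H) : j1 k H (a ⊗ₜ[k] b) = a ⊗ₜ[k] (b ⊗ₜ[k] (1 : H)) := rfl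
@[simp] lemma j2_tmul (a b : H) : j2 k H (a ⊗ₜ[k] b) = a ⊗ₜ[k] ((1 : H) ⊗ₜ[k] b) := rfl

lemma j12_gR : (j2 k H).toLinearMap ∘ₗ (gR : H →ₗ[k] H ⊗[k] H)
    = (j1 k H).toLinearMap ∘ₗ gR := by
  ext x; simp

/-- `W : x ↦ 1 ⊗ (Σ S x₁ ⊗ x₂)`. -/
noncomputable def Wm : H →ₗ[k] H ⊗[k] (H ⊗[k] H) :=
  TensorProduct.mk k H (H ⊗[k] H) 1 ∘ₗ qM

lemma Wm_apply (x : H) : (Wm : H →ₗ[k] H ⊗[k] (H ⊗[k] H)) x = (1 : H) ⊗ₜ[k] qM x := rfl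

/-- Inner telescoping lemma: `Σ (y₁ ⊗ 1) * q y₂ = 1 ⊗ y`. -/
lemma L4inner {y : H} (r : Coalgebra.Repr k y (H × H)) :
    ∑ i ∈ r.index, (r.left i ⊗ₜ[k] (1 : H)) * qM (r.right i) = (1 : H) ⊗ₜ[k] y := by
  set rl : (i : H × H) → Coalgebra.Repr k (r.left i) (H × H) :=
    fun i => Coalgebra.Repr.arbitrary k (r.left i)
  set rr : (i : H × H) → Coalgebra.Repr k (r.right i) (H × H) :=
    fun i => Coalgebra.Repr.arbitrary k (r.right i)
  have key := Coalgebra.sum_tmul_tmul_eq r rl rr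
  apply_fun ((LinearMap.mul' k H).rTensor H ∘ₗ (TensorProduct.assoc k H H H).symm.toLinearMap
    ∘ₗ LinearMap.lTensor H ((SL k H).rTensor H)) at key
  simp only [map_sum, LinearMap.comp_apply, LinearMap.lTensor_tmul, LinearEquiv.coe_coe,
    TensorProduct.assoc_symm_tmul, LinearMap.rTensor_tmul, LinearMap.mul'_apply] at key
  calc ∑ i ∈ r.index, (r.left i ⊗ₜ[k] (1 : H)) * qM (r.right i)
      = ∑ i ∈ r.index, ∑ j ∈ (rr i).index,
          (r.left i * SL k H ((rr i).left j)) ⊗ₜ[k] (rr i).right j := by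
        refine Finset.sum_congr rfl fun i _ => ?_
        rw [qM_apply (rr i), Finset.mul_sum]
        simp [Algebra.TensorProduct.tmul_mul_tmul]
    _ = ∑ i ∈ r.index, ∑ j ∈ (rl i).index,
          ((rl i).left j * SL k H ((rl i).right j)) ⊗ₜ[k] r.right i := key.symm
    _ = ∑ i ∈ r.index, algebraMap k H (Coalgebra.counit (R := k) (r.left i)) ⊗ₜ[k] r.right i := by
        refine Finset.sum_congr rfl fun i _ => ?_
        rw [← TensorProduct.sum_tmul, HopfAlgebra.sum_mul_antipode_eq_algebraMap_counit (rl i)]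
    _ = (1 : H) ⊗ₜ[k] y := by
        have h := congrArg ((Algebra.linearMap k H).rTensor H) (Coalgebra.sum_counit_tmul_eq r)
        rw [map_sum] at h
        simp only [LinearMap.rTensor_tmul, Algebra.linearMap_apply, map_one] at h
        exact h

/-- L4 : `(j₁ ∘ Δ) * W = j₂ ∘ Δ`. -/
lemma L4 : conv ((j1 k H).toLinearMap ∘ₗ Coalgebra.comul) Wm
    = (j2 k H).toLinearMap ∘ₗ Coalgebra.comul := by
  ext x
  set r := Coalgebra.Repr.arbitrary k x
  set rl : (i : H × H) → Coalgebra.Repr k (r.left i) (H × H) :=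
    fun i => Coalgebra.Repr.arbitrary k (r.left i)
  set rr : (i : H × H) → Coalgebra.Repr k (r.right i) (H × H) :=
    fun i => Coalgebra.Repr.arbitrary k (r.right i)
  have key := Coalgebra.sum_tmul_tmul_eq r rl rr
  apply_fun LinearMap.lTensor H
    (LinearMap.mul' k (H ⊗[k] H) ∘ₗ TensorProduct.map (gR : H →ₗ[k] H ⊗[k] H) qM) at key
  simp only [map_sum, LinearMap.lTensor_tmul, LinearMap.comp_apply, TensorProduct.map_tmul,
    LinearMap.mul'_apply, gR_apply] at key
  calc conv ((j1 k H).toLinearMap ∘ₗ Coalgebra.comul) Wm x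
      = ∑ i ∈ r.index, (j1 k H) (Coalgebra.comul (r.left i)) * ((1 : H) ⊗ₜ[k] qM (r.right i)) := by
        rw [conv_apply _ _ r]
        exact Finset.sum_congr rfl fun i _ => by rw [LinearMap.comp_apply, Wm_apply]; rfl
    _ = ∑ i ∈ r.index, ∑ j ∈ (rl i).index,
          (rl i).left j ⊗ₜ[k] (((rl i).right j ⊗ₜ[k] (1 : H)) * qM (r.right i)) := by
        refine Finset.sum_congr rfl fun i _ => ?_
        rw [← (rl i).eq, map_sum, Finset.sum_mul]
        refine Finset.sum_congr rfl fun j _ => ?_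
        rw [j1_tmul, Algebra.TensorProduct.tmul_mul_tmul, mul_one]
    _ = ∑ i ∈ r.index, ∑ j ∈ (rr i).index,
          r.left i ⊗ₜ[k] (((rr i).left j ⊗ₜ[k] (1 : H)) * qM ((rr i).right j)) := key
    _ = ∑ i ∈ r.index, r.left i ⊗ₜ[k] ((1 : H) ⊗ₜ[k] r.right i) := by
        refine Finset.sum_congr rfl fun i _ => ?_
        rw [← TensorProduct.tmul_sum, L4inner (rr i)]
    _ = (j2 k H) (Coalgebra.comul x) := by
        rw [← r.eq, map_sum]
        exact Finset.sum_congr rfl fun i _ => (j2_tmul _ _).symm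

/-- L5 : `(j₁ ∘ ΔS) * (j₂ ∘ Δ) = W`. -/
lemma L5 : conv ((j1 k H).toLinearMap ∘ₗ (dS : H →ₗ[k] H ⊗[k] H))
    ((j2 k H).toLinearMap ∘ₗ Coalgebra.comul) = Wm := by
  calc conv ((j1 k H).toLinearMap ∘ₗ (dS : H →ₗ[k] H ⊗[k] H))
        ((j2 k H).toLinearMap ∘ₗ Coalgebra.comul)
      = conv ((j1 k H).toLinearMap ∘ₗ dS)
          (conv ((j1 k H).toLinearMap ∘ₗ Coalgebra.comul) Wm) := by rw [L4]
    _ = conv (conv ((j1 k H).toLinearMap ∘ₗ dS) ((j1 k H).toLinearMap ∘ₗ Coalgebra.comul)) Wm :=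
        (conv_assoc _ _ _).symm
    _ = conv ((j1 k H).toLinearMap ∘ₗ conv dS Coalgebra.comul) Wm := by rw [algHom_conv]
    _ = conv (convOne k H (H ⊗[k] (H ⊗[k] H))) Wm := by rw [L1, algHom_convOne]
    _ = Wm := one_conv _

/-- L6 : `(g' ∘ S) * g' = 1`. -/
lemma L6 : conv ((gR : H →ₗ[k] H ⊗[k] H) ∘ₗ SL k H) gR = convOne k H (H ⊗[k] H) := by
  ext x
  set r := Coalgebra.Repr.arbitrary k x
  rw [conv_apply _ _ r, convOne_apply]
  calc ∑ i ∈ r.index, ((gR ∘ₗ SL k H) (r.left i)) * gR (r.right i)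
      = ∑ i ∈ r.index, (SL k H (r.left i) * r.right i) ⊗ₜ[k] (1 : H) := by
        simp [Algebra.TensorProduct.tmul_mul_tmul]
    _ = algebraMap k (H ⊗[k] H) (Coalgebra.counit (R := k) x) := by
        rw [← TensorProduct.sum_tmul, HopfAlgebra.sum_antipode_mul_eq_algebraMap_counit r,
          Algebra.TensorProduct.algebraMap_apply]

lemma beta_eq : (beta : H →ₗ[k] H ⊗[k] H) = Coalgebra.comul - gR := rfl

lemma beta_one : (beta : H →ₗ[k] H ⊗[k] H) 1 = 0 := by
  simp [beta_eq, Bialgebra.comul_one, Algebra.TensorProduct.one_def]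

lemma Phi_eq : (LinearMap.mul' k H).rTensor (H ⊗[k] H)
      ∘ₗ (TensorProduct.tensorTensorTensorComm k H H H H).toLinearMap
    = LinearMap.mul' k (H ⊗[k] (H ⊗[k] H))
      ∘ₗ TensorProduct.map (j1 k H).toLinearMap (j2 k H).toLinearMap := by
  apply TensorProduct.ext_fourfold'
  intro a b c d
  simp [Algebra.TensorProduct.tmul_mul_tmul]

lemma betaHat_tmul (v w : H) :
    betaHat (v ⊗ₜ[k] w) = j1 k H (beta v) * j2 k H (beta w) := by
  have := congr($(Phi_eq (k := k) (H := H)) (beta v ⊗ₜ[k] beta w))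
  simpa [betaHat] using this

lemma betaHat_A (Λ : H) :
    betaHat ((SL k H).rTensor H (Coalgebra.comul Λ))
      = conv ((j1 k H).toLinearMap ∘ₗ (beta : H →ₗ[k] H ⊗[k] H) ∘ₗ SL k H)
          ((j2 k H).toLinearMap ∘ₗ (beta : H →ₗ[k] H ⊗[k] H)) Λ := by
  set r := Coalgebra.Repr.arbitrary k Λ
  rw [conv_apply _ _ r, ← r.eq, map_sum, map_sum]
  exact Finset.sum_congr rfl fun i _ => by
    rw [LinearMap.rTensor_tmul, betaHat_tmul]; rfl

theorem main (Λ : H) : betaHat (etaElt Λ) = (1 : H) ⊗ₜ[k] etaElt Λ := by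
  have hbig : betaHat ((SL k H).rTensor H (Coalgebra.comul Λ)) = (1 : H) ⊗ₜ[k] etaElt Λ := by
    rw [betaHat_A]
    have hexp : conv ((j1 k H).toLinearMap ∘ₗ (beta : H →ₗ[k] H ⊗[k] H) ∘ₗ SL k H)
        ((j2 k H).toLinearMap ∘ₗ (beta : H →ₗ[k] H ⊗[k] H))
        = Wm - (j1 k H).toLinearMap ∘ₗ hM - (j2 k H).toLinearMap ∘ₗ mkL
          + convOne k H (H ⊗[k] (H ⊗[k] H)) := by
      have e1 : (j1 k H).toLinearMap ∘ₗ (beta : H →ₗ[k] H ⊗[k] H) ∘ₗ SL k H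
          = (j1 k H).toLinearMap ∘ₗ dS - (j1 k H).toLinearMap ∘ₗ (gR ∘ₗ SL k H) := by
        rw [beta_eq]
        rw [LinearMap.sub_comp, LinearMap.comp_sub]
        rfl
      have e2 : (j2 k H).toLinearMap ∘ₗ (beta : H →ₗ[k] H ⊗[k] H)
          = (j2 k H).toLinearMap ∘ₗ Coalgebra.comul - (j2 k H).toLinearMap ∘ₗ gR := by
        rw [beta_eq, LinearMap.comp_sub]
      rw [e1, e2, conv_sub_left, conv_sub_right, conv_sub_right]
      have hb : conv ((j1 k H).toLinearMap ∘ₗ (dS : H →ₗ[k] H ⊗[k] H))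
          ((j2 k H).toLinearMap ∘ₗ gR) = (j1 k H).toLinearMap ∘ₗ hM := by
        rw [j12_gR, algHom_conv, L3]
      have hc : conv ((j1 k H).toLinearMap ∘ₗ ((gR : H →ₗ[k] H ⊗[k] H) ∘ₗ SL k H))
          ((j2 k H).toLinearMap ∘ₗ Coalgebra.comul) = (j2 k H).toLinearMap ∘ₗ mkL := by
        have : (j1 k H).toLinearMap ∘ₗ ((gR : H →ₗ[k] H ⊗[k] H) ∘ₗ SL k H)
            = (j2 k H).toLinearMap ∘ₗ ((gR : H →ₗ[k] H ⊗[k] H) ∘ₗ SL k H) := by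
          ext x
          simp
        rw [this, algHom_conv, L2']
      have hd : conv ((j1 k H).toLinearMap ∘ₗ ((gR : H →ₗ[k] H ⊗[k] H) ∘ₗ SL k H))
          ((j2 k H).toLinearMap ∘ₗ gR) = convOne k H (H ⊗[k] (H ⊗[k] H)) := by
        rw [j12_gR, algHom_conv, L6, algHom_convOne]
      rw [L5, hb, hc, hd]
      abel
    rw [hexp]
    simp only [LinearMap.sub_apply, LinearMap.add_apply, LinearMap.comp_apply,
      Wm_apply, hM_apply, mkL_apply, j1_tmul, j2_tmul, convOne_apply]
    rw [etaElt]
    rw [TensorProduct.tmul_add, TensorProduct.tmul_sub, TensorProduct.tmul_sub,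
      TensorProduct.tmul_smul]
    have : algebraMap k (H ⊗[k] (H ⊗[k] H)) (Coalgebra.counit (R := k) Λ)
        = Coalgebra.counit (R := k) Λ • ((1 : H) ⊗ₜ[k] ((1 : H) ⊗ₜ[k] (1 : H))) := by
      rw [Algebra.algebraMap_eq_smul_one]
      rfl
    rw [this]
    rfl
  conv_lhs => rw [etaElt]
  rw [map_add, map_sub, map_sub, map_smul]
  rw [hbig]
  have h1 : betaHat ((HopfAlgebra.antipode (R := k) (A := H) Λ) ⊗ₜ[k] (1 : H)) = 0 := by
    rw [betaHat_tmul, beta_one]; simp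
  have h2 : betaHat ((1 : H) ⊗ₜ[k] Λ) = 0 := by
    rw [betaHat_tmul, beta_one]; simp
  have h3 : betaHat ((1 : H) ⊗ₜ[k] (1 : H)) = 0 := by
    rw [betaHat_tmul, beta_one]; simp
  rw [h1, h2, h3]
  simp

end Statement8Aux

open Statement8Aux in
/-- `η` lies in `ker ε ⊗ ker ε` (i.e. `(ε ⊗ id)η = 0` and `(id ⊗ ε)η = 0`)
and is invariant under the tensor product coaction `β̂`: `β̂(η) = 1 ⊗ η`. -/
theorem statement8 (Λ : H) :
    (Coalgebra.counit (R := k) (A := H)).rTensor H (etaElt Λ) = 0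
    ∧ (Coalgebra.counit (R := k) (A := H)).lTensor H (etaElt Λ) = 0
    ∧ betaHat (etaElt Λ) = (1 : H) ⊗ₜ[k] etaElt Λ := by
  refine ⟨?_, ?_, Statement8Aux.main Λ⟩
  · rw [etaElt, map_add, map_sub, map_sub, map_smul]
    have e1 : (Coalgebra.counit (R := k) (A := H)).rTensor H
        ((HopfAlgebra.antipode (R := k) (A := H)).rTensor H (Coalgebra.comul Λ))
        = (1 : k) ⊗ₜ[k] Λ := by
      rw [← LinearMap.rTensor_comp_apply]
      rw [show (Coalgebra.counit (R := k) (A := H)) ∘ₗ HopfAlgebra.antipode (R := k)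
            = Coalgebra.counit (R := k) (A := H) from counit_comp_antipode]
      exact Coalgebra.rTensor_counit_comul Λ
    rw [e1]
    simp only [LinearMap.rTensor_tmul]
    rw [counit_antipode (k := k) Λ]
    rw [Bialgebra.counit_one]
    have : (Coalgebra.counit (R := k) Λ) ⊗ₜ[k] (1 : H)
        = Coalgebra.counit (R := k) Λ • ((1 : k) ⊗ₜ[k] (1 : H)) := by
      rw [TensorProduct.smul_tmul', smul_eq_mul, mul_one]
    rw [this]
    abel
  · rw [etaElt, map_add, map_sub, map_sub, map_smul]
    have e1 : (Coalgebra.counit (R := k) (A := H)).lTensor H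
        ((HopfAlgebra.antipode (R := k) (A := H)).rTensor H (Coalgebra.comul Λ))
        = HopfAlgebra.antipode (R := k) (A := H) Λ ⊗ₜ[k] (1 : k) := by
      rw [← LinearMap.comp_apply, LinearMap.lTensor_comp_rTensor,
        ← LinearMap.rTensor_comp_lTensor, LinearMap.comp_apply,
        Coalgebra.lTensor_counit_comul]
      simp
    rw [e1]
    simp only [LinearMap.lTensor_tmul]
    rw [Bialgebra.counit_one]
    have : (1 : H) ⊗ₜ[k] (Coalgebra.counit (R := k) Λ)
        = Coalgebra.counit (R := k) Λ • ((1 : H) ⊗ₜ[k] (1 : k)) := by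
      rw [← TensorProduct.tmul_smul, smul_eq_mul, mul_one]
    rw [this]
    abel
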